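/- Let G = DS(L, P^core, R) be a double spider that contains a path P of length one among its legs, with P ∈ L. If deg_G(v_l) > deg_G(v_r) ≥ 3 and the double spider DS(L \ {P}, P^core, R) obtained from G by deleting the leg P admits a strongly antimagic labeling f satisfying φ_f(v_l) > φ_f(v_r), then G is strongly antimagic. -/

import Mathlib

open Classical

noncomputable section

/-- The vertex sum at `u` of an edge labeling `f`: the sum of the labels of the
edges incident to `u`. -/
def vertexSum {V : Type*} [Fintype V] (G : SimpleGraph V) (f : Sym2 V → ℕ) (u : V) : ℕ :=
  ∑ e ∈ G.incidenceFinset u, f e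

/-- `f` is an antimagic labeling of `G`: it is a bijection from the edge set of `G`
onto `{1, …, |E|}` and the vertex sums are pairwise distinct. -/
def IsAntimagicLabeling {V : Type*} [Fintype V] (G : SimpleGraph V)
    (f : Sym2 V → ℕ) : Prop :=
  Set.BijOn f G.edgeSet (Set.Icc 1 G.edgeFinset.card) ∧
  Function.Injective (vertexSum G f)

/-- `f` is a strongly antimagic labeling of `G`: it is an antimagic labeling and moreover
`deg u < deg v` implies `vertexSum u < vertexSum v`. -/
def IsStronglyAntimagicLabeling {V : Type*} [Fintype V] (G : SimpleGraph V)
    (f : Sym2 V → ℕ) : Prop :=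
  Set.BijOn f G.edgeSet (Set.Icc 1 G.edgeFinset.card) ∧
  Function.Injective (vertexSum G f) ∧
  ∀ u v : V, G.degree u < G.degree v → vertexSum G f u < vertexSum G f v

/-- `G` is antimagic if it admits an antimagic labeling. -/
def IsAntimagic {V : Type*} [Fintype V] (G : SimpleGraph V) : Prop :=
  ∃ f : Sym2 V → ℕ, IsAntimagicLabeling G f

/-- `G` is strongly antimagic if it admits a strongly antimagic labeling. -/
def IsStronglyAntimagic {V : Type*} [Fintype V] (G : SimpleGraph V) : Prop :=
  ∃ f : Sym2 V → ℕ, IsStronglyAntimagicLabeling G f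

/-- The vertex type of a double spider: the core path has vertices `0, …, s`,
and each leg of length `ℓ` (an entry of `L` or of `R`) contributes `ℓ` further
vertices, at distances `1, …, ℓ` from the branch vertex it is attached to. -/
abbrev DSVert (s : ℕ) (L R : List ℕ) : Type :=
  Fin (s + 1) ⊕ (((i : Fin L.length) × Fin (L.get i)) ⊕ ((i : Fin R.length) × Fin (R.get i)))

/-- The double spider `DS(L, Pᶜᵒʳᵉ, R)`: the core path `v_l = 0 — 1 — ⋯ — s = v_r`,
together with, for each entry `ℓ` of `L` (resp. of `R`), a leg which is a path of
length `ℓ` attached at `v_l` (resp. at `v_r`). -/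
def DoubleSpider (s : ℕ) (L R : List ℕ) : SimpleGraph (DSVert s L R) :=
  SimpleGraph.fromRel fun x y =>
    match x, y with
    | Sum.inl a, Sum.inl b => (b : ℕ) = (a : ℕ) + 1
    | Sum.inl a, Sum.inr (Sum.inl p) => (a : ℕ) = 0 ∧ (p.2 : ℕ) = 0
    | Sum.inl a, Sum.inr (Sum.inr p) => (a : ℕ) = s ∧ (p.2 : ℕ) = 0
    | Sum.inr (Sum.inl p), Sum.inr (Sum.inl q) => p.1 = q.1 ∧ (q.2 : ℕ) = (p.2 : ℕ) + 1
    | Sum.inr (Sum.inr p), Sum.inr (Sum.inr q) => p.1 = q.1 ∧ (q.2 : ℕ) = (p.2 : ℕ) + 1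
    | _, _ => False

/-- The branch vertex `v_l` of a double spider. -/
def vL (s : ℕ) (L R : List ℕ) : DSVert s L R := Sum.inl 0

/-- The branch vertex `v_r` of a double spider. -/
def vR (s : ℕ) (L R : List ℕ) : DSVert s L R := Sum.inl (Fin.last s)


section Aux
variable {s : ℕ} {L R : List ℕ}

lemma sigma_val {l : List ℕ} {p q : (i : Fin l.length) × Fin (l.get i)} :
    p = q ↔ ((p.1 : ℕ) = (q.1 : ℕ) ∧ (p.2 : ℕ) = (q.2 : ℕ)) := by
  constructor
  · rintro rfl; exact ⟨rfl, rfl⟩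
  · rintro ⟨h1, h2⟩
    obtain ⟨i, x⟩ := p; obtain ⟨j, y⟩ := q
    dsimp at h1 h2
    have : i = j := Fin.ext h1
    subst this
    exact congrArg (Sigma.mk i) (Fin.ext h2)

lemma ds_adj (x y : DSVert s L R) :
    (DoubleSpider s L R).Adj x y ↔ x ≠ y ∧
      ((match x, y with
        | Sum.inl a, Sum.inl b => (b : ℕ) = (a : ℕ) + 1
        | Sum.inl a, Sum.inr (Sum.inl p) => (a : ℕ) = 0 ∧ (p.2 : ℕ) = 0
        | Sum.inl a, Sum.inr (Sum.inr p) => (a : ℕ) = s ∧ (p.2 : ℕ) = 0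
        | Sum.inr (Sum.inl p), Sum.inr (Sum.inl q) => p.1 = q.1 ∧ (q.2 : ℕ) = (p.2 : ℕ) + 1
        | Sum.inr (Sum.inr p), Sum.inr (Sum.inr q) => p.1 = q.1 ∧ (q.2 : ℕ) = (p.2 : ℕ) + 1
        | _, _ => False) ∨
       (match y, x with
        | Sum.inl a, Sum.inl b => (b : ℕ) = (a : ℕ) + 1
        | Sum.inl a, Sum.inr (Sum.inl p) => (a : ℕ) = 0 ∧ (p.2 : ℕ) = 0
        | Sum.inl a, Sum.inr (Sum.inr p) => (a : ℕ) = s ∧ (p.2 : ℕ) = 0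
        | Sum.inr (Sum.inl p), Sum.inr (Sum.inl q) => p.1 = q.1 ∧ (q.2 : ℕ) = (p.2 : ℕ) + 1
        | Sum.inr (Sum.inr p), Sum.inr (Sum.inr q) => p.1 = q.1 ∧ (q.2 : ℕ) = (p.2 : ℕ) + 1
        | _, _ => False)) :=
  SimpleGraph.fromRel_adj _ x y

lemma ds_deg_pos (hs : 1 ≤ s) (x : DSVert s L R) :
    0 < (DoubleSpider s L R).degree x := by
  rw [SimpleGraph.degree_pos_iff_exists_adj]
  rcases x with a | (⟨i, j⟩ | ⟨i, j⟩)
  · by_cases h : (a : ℕ) < s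
    · refine ⟨Sum.inl ⟨(a : ℕ) + 1, by omega⟩, ?_⟩
      rw [ds_adj]
      refine ⟨fun hcon => ?_, Or.inl rfl⟩
      have := congrArg Fin.val (Sum.inl.inj hcon); simp at this
    · have ha : (a : ℕ) = s := by have := a.isLt; omega
      refine ⟨Sum.inl ⟨(a : ℕ) - 1, by omega⟩, ?_⟩
      rw [ds_adj]
      refine ⟨fun hcon => ?_, Or.inr (by show (a : ℕ) = _ + 1; simp; omega)⟩
      have := congrArg Fin.val (Sum.inl.inj hcon); simp at this; omega
  · by_cases h : (j : ℕ) = 0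
    · exact ⟨Sum.inl 0, by rw [ds_adj]; exact ⟨by simp, Or.inr (by exact ⟨rfl, h⟩)⟩⟩
    · refine ⟨Sum.inr (Sum.inl ⟨i, ⟨(j : ℕ) - 1, by have := j.isLt; omega⟩⟩), ?_⟩
      rw [ds_adj]
      refine ⟨fun hcon => ?_, Or.inr ⟨rfl, by simp; omega⟩⟩
      have := (sigma_val.mp (Sum.inl.inj (Sum.inr.inj hcon))).2; simp at this; omega
  · by_cases h : (j : ℕ) = 0
    · refine ⟨Sum.inl (Fin.last s), ?_⟩
      rw [ds_adj]; exact ⟨by simp, Or.inr (by exact ⟨by simp, h⟩)⟩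
    · refine ⟨Sum.inr (Sum.inr ⟨i, ⟨(j : ℕ) - 1, by have := j.isLt; omega⟩⟩), ?_⟩
      rw [ds_adj]
      refine ⟨fun hcon => ?_, Or.inr ⟨rfl, by simp; omega⟩⟩
      have := (sigma_val.mp (Sum.inr.inj (Sum.inr.inj hcon))).2; simp at this; omega

end Aux
section Aux2
variable {V : Type*} [Fintype V]

lemma deg_le_two_of {G : SimpleGraph V} {x : V} (c d : V)
    (h : ∀ y, G.Adj x y → y = c ∨ y = d) : G.degree x ≤ 2 := by
  have hsub : G.neighborFinset x ⊆ {c, d} := by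
    intro y hy
    rw [SimpleGraph.mem_neighborFinset] at hy
    rcases h y hy with rfl | rfl <;> simp
  calc G.degree x = (G.neighborFinset x).card := rfl
    _ ≤ ({c, d} : Finset V).card := Finset.card_le_card hsub
    _ ≤ 2 := by
        refine le_trans (Finset.card_insert_le _ _) ?_
        simp

end Aux2

section Aux3
variable {s : ℕ} {L R : List ℕ}

lemma ds_deg_le_two (x : DSVert s L R) (h1 : x ≠ vL s L R) (h2 : x ≠ vR s L R) :
    (DoubleSpider s L R).degree x ≤ 2 := by
  rcases x with a | (⟨i, j⟩ | ⟨i, j⟩)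
  · have ha0 : (a : ℕ) ≠ 0 := by
      intro hc; exact h1 (by simp [vL]; exact Fin.ext hc)
    have has : (a : ℕ) ≠ s := by
      intro hc; exact h2 (by simp [vR]; exact Fin.ext (by simpa using hc))
    have has' : (a : ℕ) < s := by have := a.isLt; omega
    refine deg_le_two_of (Sum.inl ⟨(a : ℕ) - 1, by omega⟩) (Sum.inl ⟨(a : ℕ) + 1, by omega⟩) ?_
    intro y hy
    rw [ds_adj] at hy
    obtain ⟨-, hy⟩ := hy
    rcases y with b | (q | q)
    · rcases hy with hb | hb
      · right; congr 1; exact Fin.ext (by simpa using hb)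
      · left; congr 1; exact Fin.ext (by simp; omega)
    · rcases hy with ⟨hb, -⟩ | hy
      · exact absurd hb ha0
      · exact absurd hy (by simp)
    · rcases hy with ⟨hb, -⟩ | hy
      · exact absurd hb has
      · exact absurd hy (by simp)
  · have hpos : 0 < L.get i := j.pos
    by_cases hj : (j : ℕ) = 0
    · refine deg_le_two_of (Sum.inl 0)
        (Sum.inr (Sum.inl ⟨i, ⟨((j : ℕ) + 1) % L.get i, Nat.mod_lt _ hpos⟩⟩)) ?_
      intro y hy
      rw [ds_adj] at hy
      obtain ⟨-, hy⟩ := hy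
      rcases y with b | (q | q)
      · rcases hy with hb | ⟨hb, -⟩
        · exact absurd hb (by simp)
        · left; congr 1; exact Fin.ext (by simpa using hb)
      · rcases hy with ⟨hq1, hq2⟩ | ⟨hq1, hq2⟩
        · right
          obtain ⟨q1, q2⟩ := q
          have h1' : i = q1 := hq1
          subst h1'
          have h2' : (q2 : ℕ) = (j : ℕ) + 1 := hq2
          have hlt : (j : ℕ) + 1 < L.get i := by have := q2.isLt; omega
          refine congrArg (fun t => Sum.inr (Sum.inl t)) (sigma_val.mpr ⟨rfl, ?_⟩)
          show (q2 : ℕ) = ((j : ℕ) + 1) % L.get i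
          rw [h2', Nat.mod_eq_of_lt hlt]
        · have h2' : (j : ℕ) = (q.2 : ℕ) + 1 := hq2
          omega
      · exact absurd hy (by simp)
    · refine deg_le_two_of (Sum.inr (Sum.inl ⟨i, ⟨(j : ℕ) - 1, by have := j.isLt; omega⟩⟩))
        (Sum.inr (Sum.inl ⟨i, ⟨((j : ℕ) + 1) % L.get i, Nat.mod_lt _ hpos⟩⟩)) ?_
      intro y hy
      rw [ds_adj] at hy
      obtain ⟨-, hy⟩ := hy
      rcases y with b | (q | q)
      · rcases hy with hb | ⟨-, hb⟩
        · exact absurd hb (by simp)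
        · exact absurd hb hj
      · rcases hy with ⟨hq1, hq2⟩ | ⟨hq1, hq2⟩
        · right
          obtain ⟨q1, q2⟩ := q
          have h1' : i = q1 := hq1
          subst h1'
          have h2' : (q2 : ℕ) = (j : ℕ) + 1 := hq2
          have hlt : (j : ℕ) + 1 < L.get i := by have := q2.isLt; omega
          refine congrArg (fun t => Sum.inr (Sum.inl t)) (sigma_val.mpr ⟨rfl, ?_⟩)
          show (q2 : ℕ) = ((j : ℕ) + 1) % L.get i
          rw [h2', Nat.mod_eq_of_lt hlt]
        · left
          have h1' : q.1 = i := hq1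
          have h2' : (j : ℕ) = (q.2 : ℕ) + 1 := hq2
          refine congrArg (fun t => Sum.inr (Sum.inl t)) (sigma_val.mpr ⟨h1' ▸ rfl, ?_⟩)
          simp; omega
      · exact absurd hy (by simp)
  · have hpos : 0 < R.get i := j.pos
    by_cases hj : (j : ℕ) = 0
    · refine deg_le_two_of (Sum.inl (Fin.last s))
        (Sum.inr (Sum.inr ⟨i, ⟨((j : ℕ) + 1) % R.get i, Nat.mod_lt _ hpos⟩⟩)) ?_
      intro y hy
      rw [ds_adj] at hy
      obtain ⟨-, hy⟩ := hy
      rcases y with b | (q | q)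
      · rcases hy with hb | ⟨hb, -⟩
        · exact absurd hb (by simp)
        · left; congr 1; exact Fin.ext (by simpa using hb)
      · exact absurd hy (by simp)
      · rcases hy with ⟨hq1, hq2⟩ | ⟨hq1, hq2⟩
        · right
          obtain ⟨q1, q2⟩ := q
          have h1' : i = q1 := hq1
          subst h1'
          have h2' : (q2 : ℕ) = (j : ℕ) + 1 := hq2
          have hlt : (j : ℕ) + 1 < R.get i := by have := q2.isLt; omega
          refine congrArg (fun t => Sum.inr (Sum.inr t)) (sigma_val.mpr ⟨rfl, ?_⟩)
          show (q2 : ℕ) = ((j : ℕ) + 1) % R.get i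
          rw [h2', Nat.mod_eq_of_lt hlt]
        · have h2' : (j : ℕ) = (q.2 : ℕ) + 1 := hq2
          omega
    · refine deg_le_two_of (Sum.inr (Sum.inr ⟨i, ⟨(j : ℕ) - 1, by have := j.isLt; omega⟩⟩))
        (Sum.inr (Sum.inr ⟨i, ⟨((j : ℕ) + 1) % R.get i, Nat.mod_lt _ hpos⟩⟩)) ?_
      intro y hy
      rw [ds_adj] at hy
      obtain ⟨-, hy⟩ := hy
      rcases y with b | (q | q)
      · rcases hy with hb | ⟨-, hb⟩
        · exact absurd hb (by simp)
        · exact absurd hb hj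
      · exact absurd hy (by simp)
      · rcases hy with ⟨hq1, hq2⟩ | ⟨hq1, hq2⟩
        · right
          obtain ⟨q1, q2⟩ := q
          have h1' : i = q1 := hq1
          subst h1'
          have h2' : (q2 : ℕ) = (j : ℕ) + 1 := hq2
          have hlt : (j : ℕ) + 1 < R.get i := by have := q2.isLt; omega
          refine congrArg (fun t => Sum.inr (Sum.inr t)) (sigma_val.mpr ⟨rfl, ?_⟩)
          show (q2 : ℕ) = ((j : ℕ) + 1) % R.get i
          rw [h2', Nat.mod_eq_of_lt hlt]
        · left
          have h1' : q.1 = i := hq1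
          have h2' : (j : ℕ) = (q.2 : ℕ) + 1 := hq2
          refine congrArg (fun t => Sum.inr (Sum.inr t)) (sigma_val.mpr ⟨h1' ▸ rfl, ?_⟩)
          simp; omega
      
end Aux3

section Emb
variable {s k : ℕ} {L R : List ℕ}

def embIdx (k : ℕ) {L : List ℕ} (hk : k < L.length) (i : Fin (L.eraseIdx k).length) :
    Fin L.length :=
  if h : (i : ℕ) < k then ⟨i, by omega⟩
  else ⟨(i : ℕ) + 1, by
    have hi := i.isLt
    have hlen : (L.eraseIdx k).length = L.length - 1 := List.length_eraseIdx_of_lt hk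
    omega⟩

lemma embIdx_val (hk : k < L.length) (i : Fin (L.eraseIdx k).length) :
    (embIdx k hk i : ℕ) = if (i : ℕ) < k then (i : ℕ) else (i : ℕ) + 1 := by
  unfold embIdx; split <;> simp_all

lemma embIdx_get (hk : k < L.length) (i : Fin (L.eraseIdx k).length) :
    (L.eraseIdx k).get i = L.get (embIdx k hk i) := by
  simp only [List.get_eq_getElem, List.getElem_eraseIdx, embIdx]
  split <;> simp_all

lemma embIdx_eq_iff (hk : k < L.length) (i j : Fin (L.eraseIdx k).length) :
    embIdx k hk i = embIdx k hk j ↔ i = j := by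
  constructor
  · intro h
    have := congrArg Fin.val h
    rw [embIdx_val, embIdx_val] at this
    exact Fin.ext (by split_ifs at this <;> omega)
  · rintro rfl; rfl

lemma embIdx_ne (hk : k < L.length) (i : Fin (L.eraseIdx k).length) :
    (embIdx k hk i : ℕ) ≠ k := by
  rw [embIdx_val]; split <;> omega

def dsEmb (s : ℕ) (k : ℕ) (L R : List ℕ) (hk : k < L.length) :
    DSVert s (L.eraseIdx k) R → DSVert s L R
  | Sum.inl a => Sum.inl a
  | Sum.inr (Sum.inl ⟨i, x⟩) =>
      Sum.inr (Sum.inl ⟨embIdx k hk i, Fin.cast (embIdx_get hk i) x⟩)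
  | Sum.inr (Sum.inr p) => Sum.inr (Sum.inr p)

lemma dsEmb_inj (hk : k < L.length) : Function.Injective (dsEmb s k L R hk) := by
  rintro (a | (⟨i, x⟩ | p)) (b | (⟨j, y⟩ | q)) h <;> simp only [dsEmb] at h
  · exact congrArg Sum.inl (Sum.inl.inj h)
  · simp at h
  · simp at h
  · simp at h
  · have hv := sigma_val.mp (Sum.inl.inj (Sum.inr.inj h))
    rw [embIdx_val, embIdx_val] at hv
    have hij : i = j := Fin.ext (by rcases hv with ⟨h1, -⟩; split_ifs at h1 <;> omega)
    subst hij
    have hxy : (x : ℕ) = (y : ℕ) := by simpa using hv.2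
    exact congrArg (fun t => Sum.inr (Sum.inl (⟨i, t⟩ : (i : Fin _) × Fin _))) (Fin.ext hxy)
  · simp at h
  · simp at h
  · simp at h
  · exact congrArg (fun t => Sum.inr (Sum.inr t)) (Sum.inr.inj (Sum.inr.inj h))
end Emb

section Emb2
variable {s k : ℕ} {L R : List ℕ}

/-- The leaf vertex corresponding to the leg of length 1 at position `k`. -/
def dsLeaf (s : ℕ) (k : ℕ) (L R : List ℕ) (hk : k < L.length) (h1 : L.get ⟨k, hk⟩ = 1) :
    DSVert s L R :=
  Sum.inr (Sum.inl ⟨⟨k, hk⟩, ⟨0, by rw [h1]; norm_num⟩⟩)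

lemma dsEmb_ne_leaf (hk : k < L.length) (h1 : L.get ⟨k, hk⟩ = 1)
    (z : DSVert s (L.eraseIdx k) R) : dsEmb s k L R hk z ≠ dsLeaf s k L R hk h1 := by
  rcases z with a | (⟨i, x⟩ | p) <;> simp only [dsEmb, dsLeaf]
  · simp
  · intro hcon
    exact embIdx_ne hk i (congrArg (fun t => (t : ℕ))
      (sigma_val.mp (Sum.inl.inj (Sum.inr.inj hcon))).1 ▸ rfl)
  · simp

lemma dsEmb_surj (hk : k < L.length) (h1 : L.get ⟨k, hk⟩ = 1)
    (x : DSVert s L R) (hx : x ≠ dsLeaf s k L R hk h1) :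
    ∃ z, dsEmb s k L R hk z = x := by
  have hlen : (L.eraseIdx k).length = L.length - 1 := List.length_eraseIdx_of_lt hk
  rcases x with a | (⟨i, y⟩ | p)
  · exact ⟨Sum.inl a, rfl⟩
  · by_cases hik : (i : ℕ) < k
    · have hi' : (i : ℕ) < (L.eraseIdx k).length := by omega
      refine ⟨Sum.inr (Sum.inl ⟨⟨i, hi'⟩, Fin.cast ?_ y⟩), ?_⟩
      · rw [embIdx_get hk ⟨i, hi'⟩]
        congr 1
        exact Fin.ext (by rw [embIdx_val]; simp [hik])
      · simp only [dsEmb]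
        refine congrArg (fun t => Sum.inr (Sum.inl t)) (sigma_val.mpr ⟨?_, by simp⟩)
        rw [embIdx_val]; simp [hik]
    · by_cases hik2 : (i : ℕ) = k
      · exfalso
        apply hx
        unfold dsLeaf
        refine congrArg (fun t => Sum.inr (Sum.inl t)) (sigma_val.mpr ⟨by simp [hik2], ?_⟩)
        have : (y : ℕ) < L.get i := y.isLt
        have h1' : L.get i = 1 := by
          rw [show i = ⟨k, hk⟩ from Fin.ext hik2]; exact h1
        simp; omega
      · have hik3 : k < (i : ℕ) := by omega
        have hi' : (i : ℕ) - 1 < (L.eraseIdx k).length := by have := i.isLt; omega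
        refine ⟨Sum.inr (Sum.inl ⟨⟨(i : ℕ) - 1, hi'⟩, Fin.cast ?_ y⟩), ?_⟩
        · rw [embIdx_get hk ⟨(i : ℕ) - 1, hi'⟩]
          congr 1
          exact Fin.ext (by rw [embIdx_val]; split_ifs with hsp <;> simp at hsp ⊢ <;> omega)
        · simp only [dsEmb]
          refine congrArg (fun t => Sum.inr (Sum.inl t)) (sigma_val.mpr ⟨?_, by simp⟩)
          rw [embIdx_val]; split_ifs with hsp <;> simp at hsp ⊢ <;> omega
  · exact ⟨Sum.inr (Sum.inr p), rfl⟩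

lemma dsEmb_adj (hk : k < L.length) (z w : DSVert s (L.eraseIdx k) R) :
    (DoubleSpider s (L.eraseIdx k) R).Adj z w ↔
      (DoubleSpider s L R).Adj (dsEmb s k L R hk z) (dsEmb s k L R hk w) := by
  rw [ds_adj, ds_adj]
  refine and_congr ((dsEmb_inj hk).ne_iff).symm (or_congr ?_ ?_) <;>
    rcases z with a | (⟨i, x⟩ | p) <;> rcases w with b | (⟨j, y⟩ | q) <;>
      simp only [dsEmb] <;>
      simp [embIdx_eq_iff, Fin.coe_cast]

end Emb2

section Emb3
variable {s k : ℕ} {L R : List ℕ}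

lemma adj_leaf_iff (hk : k < L.length) (h1 : L.get ⟨k, hk⟩ = 1) (y : DSVert s L R) :
    (DoubleSpider s L R).Adj (dsLeaf s k L R hk h1) y ↔ y = Sum.inl 0 := by
  constructor
  · intro hy
    rw [ds_adj] at hy
    obtain ⟨-, hy⟩ := hy
    rcases y with b | (q | q)
    · rcases hy with hb | ⟨hb, -⟩
      · exact absurd hb (by simp [dsLeaf])
      · exact congrArg Sum.inl (Fin.ext (by simpa using hb))
    · exfalso
      obtain ⟨q1, q2⟩ := q
      rcases hy with ⟨hq1, hq2⟩ | ⟨hq1, hq2⟩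
      · have e1 : (⟨k, hk⟩ : Fin L.length) = q1 := hq1
        have e2 : (q2 : ℕ) = 0 + 1 := hq2
        subst e1
        have hlt : (q2 : ℕ) < L.get ⟨k, hk⟩ := q2.isLt
        omega
      · have e2 : (0 : ℕ) = (q2 : ℕ) + 1 := hq2
        omega
    · exact absurd hy (by simp [dsLeaf])
  · rintro rfl
    rw [ds_adj]
    exact ⟨by simp [dsLeaf], Or.inr ⟨rfl, rfl⟩⟩

lemma newEdge_mem (hk : k < L.length) (h1 : L.get ⟨k, hk⟩ = 1) :
    s(Sum.inl 0, dsLeaf s k L R hk h1) ∈ (DoubleSpider s L R).edgeSet := by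
  rw [SimpleGraph.mem_edgeSet, SimpleGraph.adj_comm, adj_leaf_iff]

lemma leaf_not_mem_map (hk : k < L.length) (h1 : L.get ⟨k, hk⟩ = 1)
    (e' : Sym2 (DSVert s (L.eraseIdx k) R)) :
    dsLeaf s k L R hk h1 ∉ Sym2.map (dsEmb s k L R hk) e' := by
  intro hmem
  rw [Sym2.mem_map] at hmem
  obtain ⟨a, -, ha⟩ := hmem
  exact dsEmb_ne_leaf hk h1 a ha

lemma map_mem_edgeSet (hk : k < L.length)
    {e' : Sym2 (DSVert s (L.eraseIdx k) R)}
    (he : e' ∈ (DoubleSpider s (L.eraseIdx k) R).edgeSet) :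
    Sym2.map (dsEmb s k L R hk) e' ∈ (DoubleSpider s L R).edgeSet := by
  induction e' using Sym2.ind with
  | _ x y =>
    rw [Sym2.map_pair_eq, SimpleGraph.mem_edgeSet] at *
    exact (dsEmb_adj hk x y).mp he

lemma ds_edge_decomp (hk : k < L.length) (h1 : L.get ⟨k, hk⟩ = 1)
    {e : Sym2 (DSVert s L R)} (he : e ∈ (DoubleSpider s L R).edgeSet) :
    e = s(Sum.inl 0, dsLeaf s k L R hk h1) ∨
      ∃ e' ∈ (DoubleSpider s (L.eraseIdx k) R).edgeSet, e = Sym2.map (dsEmb s k L R hk) e' := by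
  induction e using Sym2.ind with
  | _ x y =>
    rw [SimpleGraph.mem_edgeSet] at he
    by_cases hx : x = dsLeaf s k L R hk h1
    · subst hx
      left
      rw [(adj_leaf_iff hk h1 y).mp he]
      exact Sym2.eq_swap
    · by_cases hy : y = dsLeaf s k L R hk h1
      · subst hy
        left
        rw [(adj_leaf_iff hk h1 x).mp he.symm]
      · obtain ⟨x', rfl⟩ := dsEmb_surj hk h1 x hx
        obtain ⟨y', rfl⟩ := dsEmb_surj hk h1 y hy
        right
        exact ⟨s(x', y'), (dsEmb_adj hk x' y').mpr he, (Sym2.map_pair_eq _ _ _).symm⟩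

lemma ds_edgeSet_eq (hk : k < L.length) (h1 : L.get ⟨k, hk⟩ = 1) :
    (DoubleSpider s L R).edgeSet =
      insert (s(Sum.inl 0, dsLeaf s k L R hk h1))
        (Sym2.map (dsEmb s k L R hk) '' (DoubleSpider s (L.eraseIdx k) R).edgeSet) := by
  ext e
  constructor
  · intro he
    rcases ds_edge_decomp hk h1 he with h | ⟨e', he', rfl⟩
    · exact h ▸ Set.mem_insert _ _
    · exact Set.mem_insert_of_mem _ ⟨e', he', rfl⟩
  · rintro (rfl | ⟨e', he', rfl⟩)
    · exact newEdge_mem hk h1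
    · exact map_mem_edgeSet hk he'

lemma ds_card_edges (hk : k < L.length) (h1 : L.get ⟨k, hk⟩ = 1) :
    (DoubleSpider s L R).edgeFinset.card =
      (DoubleSpider s (L.eraseIdx k) R).edgeFinset.card + 1 := by
  have e1 : (DoubleSpider s L R).edgeFinset.card = (DoubleSpider s L R).edgeSet.ncard :=
    (Set.ncard_eq_toFinset_card' _).symm
  have e2 : (DoubleSpider s (L.eraseIdx k) R).edgeFinset.card
      = (DoubleSpider s (L.eraseIdx k) R).edgeSet.ncard :=
    (Set.ncard_eq_toFinset_card' _).symm
  rw [e1, e2, ds_edgeSet_eq hk h1]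
  rw [Set.ncard_insert_of_notMem ?hnot ?hfin]
  · rw [Set.ncard_image_of_injective _ (Sym2.map.injective (dsEmb_inj hk))]
  case hnot =>
    rintro ⟨e', -, heq⟩
    exact leaf_not_mem_map hk h1 e' (heq ▸ Sym2.mem_mk_right _ _)
  case hfin => exact Set.toFinite _

end Emb3

section Emb4
variable {s k : ℕ} {L R : List ℕ}


lemma vertexSum_eq {V : Type*} [Fintype V] (G : SimpleGraph V) (f : Sym2 V → ℕ) (u : V)
    {t : Finset (Sym2 V)} (ht : ∀ e, e ∈ t ↔ e ∈ G.incidenceSet u) :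
    vertexSum G f u = ∑ e ∈ t, f e := by
  unfold vertexSum
  refine Finset.sum_congr (Finset.ext fun e => ?_) fun _ _ => rfl
  rw [SimpleGraph.mem_incidenceFinset]
  exact (ht e).symm

def dsRetr (s k : ℕ) (L R : List ℕ) (hk : k < L.length) :
    DSVert s L R → DSVert s (L.eraseIdx k) R := fun x =>
  if h : ∃ z, dsEmb s k L R hk z = x then h.choose else Sum.inl 0

lemma dsRetr_emb (hk : k < L.length) (z : DSVert s (L.eraseIdx k) R) :
    dsRetr s k L R hk (dsEmb s k L R hk z) = z := by
  unfold dsRetr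
  rw [dif_pos ⟨z, rfl⟩]
  exact dsEmb_inj hk (Exists.choose_spec (⟨z, rfl⟩ : ∃ w, dsEmb s k L R hk w = dsEmb s k L R hk z))

/-- The extended labeling. -/
def newLab (s k : ℕ) (L R : List ℕ) (hk : k < L.length) (h1 : L.get ⟨k, hk⟩ = 1)
    (f : Sym2 (DSVert s (L.eraseIdx k) R) → ℕ) : Sym2 (DSVert s L R) → ℕ := fun e =>
  if e = s(Sum.inl 0, dsLeaf s k L R hk h1) then 1
  else f (Sym2.map (dsRetr s k L R hk) e) + 1

lemma newLab_newEdge (hk : k < L.length) (h1 : L.get ⟨k, hk⟩ = 1)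
    (f : Sym2 (DSVert s (L.eraseIdx k) R) → ℕ) :
    newLab s k L R hk h1 f (s(Sum.inl 0, dsLeaf s k L R hk h1)) = 1 := if_pos rfl

lemma newLab_map (hk : k < L.length) (h1 : L.get ⟨k, hk⟩ = 1)
    (f : Sym2 (DSVert s (L.eraseIdx k) R) → ℕ) (e' : Sym2 (DSVert s (L.eraseIdx k) R)) :
    newLab s k L R hk h1 f (Sym2.map (dsEmb s k L R hk) e') = f e' + 1 := by
  unfold newLab
  rw [if_neg, Sym2.map_map]
  · have hid : dsRetr s k L R hk ∘ dsEmb s k L R hk = id := funext (dsRetr_emb hk)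
    rw [hid, Sym2.map_id, id_eq]
  · intro hcon
    exact leaf_not_mem_map hk h1 e' (hcon ▸ Sym2.mem_mk_right _ _)

lemma incidence_decomp (hk : k < L.length) (h1 : L.get ⟨k, hk⟩ = 1)
    (z : DSVert s (L.eraseIdx k) R) :
    (DoubleSpider s L R).incidenceFinset (dsEmb s k L R hk z) =
      ((DoubleSpider s (L.eraseIdx k) R).incidenceFinset z).image
          (Sym2.map (dsEmb s k L R hk)) ∪
        (if z = Sum.inl 0 then {s(Sum.inl 0, dsLeaf s k L R hk h1)} else ∅) := by
  ext e
  rw [SimpleGraph.mem_incidenceFinset]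
  constructor
  · intro he
    obtain ⟨hedge, hmem⟩ : e ∈ (DoubleSpider s L R).edgeSet ∧ dsEmb s k L R hk z ∈ e := he
    rcases ds_edge_decomp hk h1 hedge with rfl | ⟨e', he', rfl⟩
    · have hz : z = Sum.inl 0 := by
        rcases Sym2.mem_iff.mp hmem with hl | hr
        · exact dsEmb_inj hk hl
        · exact absurd hr (dsEmb_ne_leaf hk h1 z)
      rw [Finset.mem_union, hz]
      right
      simp
    · rw [Finset.mem_union]
      left
      rw [Finset.mem_image]
      refine ⟨e', ?_, rfl⟩
      rw [SimpleGraph.mem_incidenceFinset]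
      refine ⟨he', ?_⟩
      rw [Sym2.mem_map] at hmem
      obtain ⟨a, ha, haa⟩ := hmem
      rwa [← dsEmb_inj hk haa]
  · intro he
    rw [Finset.mem_union] at he
    rcases he with he | he
    · rw [Finset.mem_image] at he
      obtain ⟨e', he', rfl⟩ := he
      rw [SimpleGraph.mem_incidenceFinset] at he'
      obtain ⟨hedge, hmem⟩ : e' ∈ _ ∧ z ∈ e' := he'
      exact ⟨map_mem_edgeSet hk hedge, Sym2.mem_map.mpr ⟨z, hmem, rfl⟩⟩
    · split at he
      · next hz =>
        rw [Finset.mem_singleton] at he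
        subst he
        subst hz
        exact ⟨newEdge_mem hk h1, Sym2.mem_mk_left _ _⟩
      · simp at he

lemma newEdge_not_mem_image (hk : k < L.length) (h1 : L.get ⟨k, hk⟩ = 1)
    (t : Finset (Sym2 (DSVert s (L.eraseIdx k) R))) :
    s(Sum.inl 0, dsLeaf s k L R hk h1) ∉ t.image (Sym2.map (dsEmb s k L R hk)) := by
  rw [Finset.mem_image]
  rintro ⟨e', -, heq⟩
  exact leaf_not_mem_map hk h1 e' (heq ▸ Sym2.mem_mk_right _ _)

lemma deg_emb (hk : k < L.length) (h1 : L.get ⟨k, hk⟩ = 1) (z : DSVert s (L.eraseIdx k) R) :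
    (DoubleSpider s L R).degree (dsEmb s k L R hk z) =
      (DoubleSpider s (L.eraseIdx k) R).degree z + (if z = Sum.inl 0 then 1 else 0) := by
  rw [← SimpleGraph.card_incidenceFinset_eq_degree, ← SimpleGraph.card_incidenceFinset_eq_degree,
    incidence_decomp hk h1 z, Finset.card_union_of_disjoint, Finset.card_image_of_injective _
      (Sym2.map.injective (dsEmb_inj hk))]
  · congr 1
    split <;> simp
  · split
    · rw [Finset.disjoint_singleton_right]
      exact newEdge_not_mem_image hk h1 _
    · exact Finset.disjoint_empty_right _

lemma sum_emb (hk : k < L.length) (h1 : L.get ⟨k, hk⟩ = 1)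
    (f : Sym2 (DSVert s (L.eraseIdx k) R) → ℕ) (z : DSVert s (L.eraseIdx k) R) :
    vertexSum (DoubleSpider s L R) (newLab s k L R hk h1 f) (dsEmb s k L R hk z) =
      vertexSum (DoubleSpider s (L.eraseIdx k) R) f z
        + (DoubleSpider s (L.eraseIdx k) R).degree z + (if z = Sum.inl 0 then 1 else 0) := by
  have hmem : ∀ e, e ∈ ((DoubleSpider s (L.eraseIdx k) R).incidenceFinset z).image
          (Sym2.map (dsEmb s k L R hk)) ∪
        (if z = Sum.inl 0 then {s(Sum.inl 0, dsLeaf s k L R hk h1)} else ∅) ↔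
      e ∈ (DoubleSpider s L R).incidenceSet (dsEmb s k L R hk z) := by
    intro e
    rw [← SimpleGraph.mem_incidenceFinset, incidence_decomp hk h1 z]
  rw [vertexSum_eq _ _ _ hmem,
    vertexSum_eq (DoubleSpider s (L.eraseIdx k) R) f z
      (t := (DoubleSpider s (L.eraseIdx k) R).incidenceFinset z)
      (fun e => SimpleGraph.mem_incidenceFinset _ _ _),
    Finset.sum_union]
  · rw [Finset.sum_image (fun x _ y _ h => Sym2.map.injective (dsEmb_inj hk) h)]
    have hcg : ∀ e' ∈ (DoubleSpider s (L.eraseIdx k) R).incidenceFinset z,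
        newLab s k L R hk h1 f (Sym2.map (dsEmb s k L R hk) e') = f e' + 1 :=
      fun e' _ => newLab_map hk h1 f e'
    rw [Finset.sum_congr rfl hcg, Finset.sum_add_distrib, Finset.sum_const, smul_eq_mul,
      mul_one, SimpleGraph.card_incidenceFinset_eq_degree]
    congr 1
    split
    · rw [Finset.sum_singleton, newLab_newEdge]
    · simp
  · split
    · rw [Finset.disjoint_singleton_right]
      exact newEdge_not_mem_image hk h1 _
    · exact Finset.disjoint_empty_right _

lemma leaf_incidence (hk : k < L.length) (h1 : L.get ⟨k, hk⟩ = 1) :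
    (DoubleSpider s L R).incidenceFinset (dsLeaf s k L R hk h1) =
      {s(Sum.inl 0, dsLeaf s k L R hk h1)} := by
  ext e
  rw [SimpleGraph.mem_incidenceFinset, Finset.mem_singleton]
  constructor
  · rintro ⟨hedge, hmem⟩
    rcases ds_edge_decomp hk h1 hedge with rfl | ⟨e', -, rfl⟩
    · rfl
    · exact absurd hmem (leaf_not_mem_map hk h1 e')
  · rintro rfl
    exact ⟨newEdge_mem hk h1, Sym2.mem_mk_right _ _⟩

lemma deg_leaf (hk : k < L.length) (h1 : L.get ⟨k, hk⟩ = 1) :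
    (DoubleSpider s L R).degree (dsLeaf s k L R hk h1) = 1 := by
  rw [← SimpleGraph.card_incidenceFinset_eq_degree, leaf_incidence hk h1,
    Finset.card_singleton]

lemma sum_leaf (hk : k < L.length) (h1 : L.get ⟨k, hk⟩ = 1)
    (f : Sym2 (DSVert s (L.eraseIdx k) R) → ℕ) :
    vertexSum (DoubleSpider s L R) (newLab s k L R hk h1 f) (dsLeaf s k L R hk h1) = 1 := by
  have hmem : ∀ e, e ∈ ({s(Sum.inl 0, dsLeaf s k L R hk h1)} :
        Finset (Sym2 (DSVert s L R))) ↔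
      e ∈ (DoubleSpider s L R).incidenceSet (dsLeaf s k L R hk h1) := by
    intro e
    rw [← leaf_incidence hk h1, SimpleGraph.mem_incidenceFinset]
  rw [vertexSum_eq _ _ _ hmem, Finset.sum_singleton, newLab_newEdge]

end Emb4

section Emb5
variable {s k : ℕ} {L R : List ℕ}

lemma edgeFinset_card_eq_ncard {V : Type*} (G : SimpleGraph V) (inst : Fintype G.edgeSet) :
    (@SimpleGraph.edgeFinset V G inst).card = G.edgeSet.ncard :=
  (@Set.ncard_eq_toFinset_card' _ G.edgeSet inst).symm

lemma ds_ncard_edges (hk : k < L.length) (h1 : L.get ⟨k, hk⟩ = 1) :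
    (DoubleSpider s L R).edgeSet.ncard =
      (DoubleSpider s (L.eraseIdx k) R).edgeSet.ncard + 1 := by
  have h := ds_card_edges (s := s) (R := R) hk h1
  rwa [edgeFinset_card_eq_ncard, edgeFinset_card_eq_ncard] at h

lemma newLab_bijOn (hk : k < L.length) (h1 : L.get ⟨k, hk⟩ = 1)
    (f : Sym2 (DSVert s (L.eraseIdx k) R) → ℕ)
    (hf : Set.BijOn f (DoubleSpider s (L.eraseIdx k) R).edgeSet
      (Set.Icc 1 (DoubleSpider s (L.eraseIdx k) R).edgeSet.ncard)) :
    Set.BijOn (newLab s k L R hk h1 f) (DoubleSpider s L R).edgeSet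
      (Set.Icc 1 ((DoubleSpider s (L.eraseIdx k) R).edgeSet.ncard + 1)) := by
  set m := (DoubleSpider s (L.eraseIdx k) R).edgeSet.ncard with hm
  refine ⟨?_, ?_, ?_⟩
  · intro e he
    rcases ds_edge_decomp hk h1 he with rfl | ⟨e', he', rfl⟩
    · rw [newLab_newEdge]
      exact ⟨le_refl 1, by omega⟩
    · rw [newLab_map]
      have := hf.mapsTo he'
      rw [Set.mem_Icc] at this ⊢
      omega
  · intro e1 he1 e2 he2 heq
    rcases ds_edge_decomp hk h1 he1 with rfl | ⟨e1', he1', rfl⟩ <;>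
      rcases ds_edge_decomp hk h1 he2 with rfl | ⟨e2', he2', rfl⟩
    · rfl
    · rw [newLab_newEdge, newLab_map] at heq
      have := hf.mapsTo he2'
      rw [Set.mem_Icc] at this
      omega
    · rw [newLab_newEdge, newLab_map] at heq
      have := hf.mapsTo he1'
      rw [Set.mem_Icc] at this
      omega
    · rw [newLab_map, newLab_map] at heq
      have : e1' = e2' := hf.injOn he1' he2' (by omega)
      rw [this]
  · intro n hn
    rw [Set.mem_Icc] at hn
    by_cases hn1 : n = 1
    · exact ⟨s(Sum.inl 0, dsLeaf s k L R hk h1), newEdge_mem hk h1, by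
        rw [newLab_newEdge, hn1]⟩
    · have : n - 1 ∈ Set.Icc 1 m := by rw [Set.mem_Icc]; omega
      obtain ⟨e', he', hfe⟩ := hf.surjOn this
      exact ⟨Sym2.map (dsEmb s k L R hk) e', map_mem_edgeSet hk he', by
        rw [newLab_map, hfe]; omega⟩

lemma vertexSum_pos {V : Type*} [Fintype V] (G : SimpleGraph V) (f : Sym2 V → ℕ)
    (hbd : ∀ e ∈ G.edgeSet, 1 ≤ f e) (u : V) (hadj : ∃ v, G.Adj u v) :
    1 ≤ vertexSum G f u := by
  rw [vertexSum_eq G f u (t := G.incidenceFinset u)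
    (fun e => SimpleGraph.mem_incidenceFinset _ _ _)]
  obtain ⟨v, hv⟩ := hadj
  have hmem : s(u, v) ∈ G.incidenceFinset u := by
    rw [SimpleGraph.mem_incidenceFinset]
    exact (G.mk'_mem_incidenceSet_iff).mpr ⟨hv, Or.inl rfl⟩
  calc 1 ≤ f s(u, v) := hbd _ (G.mem_edgeSet.mpr hv)
    _ ≤ ∑ e ∈ G.incidenceFinset u, f e :=
        Finset.single_le_sum (fun _ _ => Nat.zero_le _) hmem

end Emb5
/-- Let `G = DS(L, Pᶜᵒʳᵉ, R)` be a double spider containing a leg `P` of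
length one with `P ∈ L`.  If `deg_G(v_l) > deg_G(v_r) ≥ 3` and the double spider
`DS(L \ {P}, Pᶜᵒʳᵉ, R)` obtained from `G` by deleting the leg `P` admits a strongly
antimagic labeling `f` with `φ_f(v_l) > φ_f(v_r)`, then `G` is strongly antimagic. -/
theorem stronglyAntimagic_of_erase_left_one (s : ℕ) (hs : 1 ≤ s) (L R : List ℕ)
    (hL : ∀ ℓ ∈ L, 1 ≤ ℓ) (hR : ∀ ℓ ∈ R, 1 ≤ ℓ)
    (hP : 1 ∈ L)
    (hlr : (DoubleSpider s L R).degree (vR s L R) < (DoubleSpider s L R).degree (vL s L R))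
    (hr : 3 ≤ (DoubleSpider s L R).degree (vR s L R))
    (h : ∃ f : Sym2 (DSVert s (L.erase 1) R) → ℕ,
      IsStronglyAntimagicLabeling (DoubleSpider s (L.erase 1) R) f ∧
      vertexSum (DoubleSpider s (L.erase 1) R) f (vR s (L.erase 1) R) <
        vertexSum (DoubleSpider s (L.erase 1) R) f (vL s (L.erase 1) R)) :
    IsStronglyAntimagic (DoubleSpider s L R) := by
  classical
  have hk : List.idxOf 1 L < L.length := List.idxOf_lt_length_iff.mpr hP
  have h1 : L.get ⟨List.idxOf 1 L, hk⟩ = 1 := List.getElem_idxOf hk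
  have herase : L.erase 1 = L.eraseIdx (List.idxOf 1 L) :=
    List.erase_eq_eraseIdx_of_idxOf rfl
  rw [herase] at h
  set k := List.idxOf 1 L with hkdef
  obtain ⟨f, ⟨hbij, hinj, hmono⟩, hsum⟩ := h
  set G := DoubleSpider s L R with hG
  set G' := DoubleSpider s (L.eraseIdx k) R with hG'
  set ι := dsEmb s k L R hk with hι
  set leaf := dsLeaf s k L R hk h1 with hleaf
  set g := newLab s k L R hk h1 f with hg
  set m := G'.edgeSet.ncard with hm
  -- basic facts
  have hbij' : Set.BijOn f G'.edgeSet (Set.Icc 1 m) := by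
    rwa [edgeFinset_card_eq_ncard] at hbij
  have hbd : ∀ e ∈ G'.edgeSet, 1 ≤ f e := fun e he => (Set.mem_Icc.mp (hbij'.mapsTo he)).1
  have hdpos' : ∀ z, 0 < G'.degree z := fun z => ds_deg_pos hs z
  have hφpos : ∀ z, 1 ≤ vertexSum G' f z := by
    intro z
    refine vertexSum_pos G' f hbd z ?_
    rw [← SimpleGraph.degree_pos_iff_exists_adj]
    exact hdpos' z
  have hιvL : ι (Sum.inl 0) = vL s L R := rfl
  have hιvR : ι (Sum.inl (Fin.last s)) = vR s L R := rfl
  have hlast0 : (Sum.inl (Fin.last s) : DSVert s (L.eraseIdx k) R) ≠ Sum.inl 0 := by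
    intro hcon
    have := congrArg Fin.val (Sum.inl.inj hcon)
    simp [Fin.last] at this
    omega
  -- degree of vL and vR in G
  have hdvL : G.degree (vL s L R) = G'.degree (Sum.inl 0) + 1 := by
    rw [← hιvL, hι, hG, hG', deg_emb hk h1, if_pos rfl]
  have hdvR : G.degree (vR s L R) = G'.degree (Sum.inl (Fin.last s)) := by
    rw [← hιvR, hι, hG, hG', deg_emb hk h1, if_neg hlast0]
    omega
  -- vertex sums at vL', vR'
  have hsum' : vertexSum G' f (Sum.inl (Fin.last s)) < vertexSum G' f (Sum.inl 0) := hsum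
  -- key uniqueness fact
  have hkey : ∀ z, G'.degree z = G'.degree (Sum.inl 0) →
      vertexSum G' f z ≤ vertexSum G' f (Sum.inl 0) := by
    intro z hz
    by_cases hz0 : z = Sum.inl 0
    · rw [hz0]
    · have hd3 : 3 ≤ G'.degree (Sum.inl 0) := by
        rw [hdvR] at hr
        rw [hdvL, hdvR] at hlr
        omega
      have hdiz : G.degree (ι z) = G'.degree z := by
        rw [hι, hG, hG', deg_emb hk h1, if_neg hz0]
        omega
      have hn2 : ¬ (G.degree (ι z) ≤ 2) := by omega
      have hvz : ι z = vL s L R ∨ ι z = vR s L R := by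
        by_contra hcon
        push_neg at hcon
        exact hn2 (ds_deg_le_two (ι z) hcon.1 hcon.2)
      rcases hvz with hvz | hvz
      · exact absurd (dsEmb_inj hk (hvz.trans hιvL.symm)) hz0
      · rw [dsEmb_inj hk (hvz.trans hιvR.symm)]
        exact le_of_lt hsum'
  -- sum and degree formulas
  have F1 : ∀ z, vertexSum G g (ι z) = vertexSum G' f z + G'.degree z +
      (if z = Sum.inl 0 then 1 else 0) := fun z => sum_emb hk h1 f z
  have F2 : vertexSum G g leaf = 1 := sum_leaf hk h1 f
  have F3 : ∀ z, G.degree (ι z) = G'.degree z + (if z = Sum.inl 0 then 1 else 0) :=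
    fun z => deg_emb hk h1 z
  have F4 : G.degree leaf = 1 := deg_leaf hk h1
  have F5 : ∀ x : DSVert s L R, x = leaf ∨ ∃ z, ι z = x := by
    intro x
    by_cases hx : x = leaf
    · exact Or.inl hx
    · exact Or.inr (dsEmb_surj hk h1 x hx)
  -- degrees are positive in G
  have hDpos : ∀ x : DSVert s L R, 1 ≤ G.degree x := fun x => ds_deg_pos hs x
  -- monotonicity
  have hmono2 : ∀ u v : DSVert s L R, G.degree u < G.degree v →
      vertexSum G g u < vertexSum G g v := by
    intro u v hd
    rcases F5 v with rfl | ⟨z, rfl⟩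
    · rw [F4] at hd
      exact absurd (hDpos u) (by omega)
    · rcases F5 u with rfl | ⟨y, rfl⟩
      · rw [F2, F1]
        have := hφpos z
        have := hdpos' z
        omega
      · rw [F3, F3] at hd
        rw [F1, F1]
        by_cases hy0 : y = Sum.inl 0 <;> by_cases hz0 : z = Sum.inl 0
        · subst hy0; subst hz0; omega
        · rw [if_pos hy0, if_neg hz0] at hd ⊢
          have hlt : G'.degree y < G'.degree z := by omega
          have := hmono y z hlt
          omega
        · rw [if_neg hy0, if_pos hz0] at hd ⊢
          have hle : G'.degree y ≤ G'.degree z := by omega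
          rcases lt_or_eq_of_le hle with hlt | heq
          · have := hmono y z hlt
            omega
          · subst hz0
            have := hkey y heq
            omega
        · rw [if_neg hy0, if_neg hz0] at hd ⊢
          have := hmono y z (by omega)
          omega
  -- injectivity
  have hinj2 : Function.Injective (vertexSum G g) := by
    intro u v heq
    have hdeq : G.degree u = G.degree v := by
      by_contra hne
      rcases Nat.lt_or_ge (G.degree u) (G.degree v) with hlt | hge
      · exact absurd heq (Nat.ne_of_lt (hmono2 u v hlt))
      · have hlt : G.degree v < G.degree u := by omega
        exact absurd heq.symm (Nat.ne_of_lt (hmono2 v u hlt))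
    rcases F5 u with rfl | ⟨y, rfl⟩ <;> rcases F5 v with rfl | ⟨z, rfl⟩
    · rfl
    · rw [F2, F1] at heq
      have := hφpos z
      have := hdpos' z
      omega
    · rw [F2, F1] at heq
      have := hφpos y
      have := hdpos' y
      omega
    · rw [F1, F1] at heq
      rw [F3, F3] at hdeq
      have hφeq : vertexSum G' f y = vertexSum G' f z := by omega
      rw [hinj hφeq]
  -- assemble
  refine ⟨g, ?_, hinj2, hmono2⟩
  have hcard : G.edgeFinset.card = m + 1 := by
    rw [edgeFinset_card_eq_ncard, hm, hG, hG', ds_ncard_edges hk h1]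
  rw [hcard]
  exact newLab_bijOn hk h1 f hbij'

end
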